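/- Let X, Y, S be topological spaces, f : X → S continuous, and g : Y → S a continuous surjective open map all of whose fibres g⁻¹({s}) are connected. If X is connected, then the topological fibre product X ×_S Y = {(x, y) ∈ X × Y : f(x) = g(y)} (with the subspace topology from X × Y) is connected. -/
import Mathlib


/-- If `f : X → S` is continuous, `g : Y → S` is a continuous surjective open map
with connected fibres, and `X` is connected, then the topological fibre product
`X ×_S Y = {(x, y) | f x = g y}` (with the subspace topology of `X × Y`) is
connected. -/
theorem isConnected_fiberProduct {X Y S : Type*} [TopologicalSpace X]
    [TopologicalSpace Y] [TopologicalSpace S] {f : X → S} {g : Y → S}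
    (hf : Continuous f) (hg : Continuous g) (hgsurj : Function.Surjective g)
    (hgopen : IsOpenMap g) (hfib : ∀ s : S, IsConnected (g ⁻¹' {s}))
    (hX : ConnectedSpace X) :
    IsConnected {p : X × Y | f p.1 = g p.2} := by
  set Z : Set (X × Y) := {p : X × Y | f p.1 = g p.2} with hZdef
  -- the projection to X, as a map on the subtype
  set p : Z → X := fun z => z.1.1 with hp
  have hpc : Continuous p := continuous_fst.comp continuous_subtype_val
  -- p is an open map
  have hpopen : IsOpenMap p := by
    intro O hO
    rw [isOpen_induced_iff] at hO
    obtain ⟨W, hW, rfl⟩ := hO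
    have himg : p '' (Subtype.val ⁻¹' W) = Prod.fst '' (W ∩ Z) := by
      ext x
      constructor
      · rintro ⟨⟨z, hz⟩, hzW, rfl⟩
        exact ⟨z, ⟨hzW, hz⟩, rfl⟩
      · rintro ⟨z, ⟨hzW, hz⟩, rfl⟩
        exact ⟨⟨z, hz⟩, hzW, rfl⟩
    rw [himg]
    rw [isOpen_iff_forall_mem_open]
    rintro x ⟨z, ⟨hzW, hz⟩, rfl⟩
    obtain ⟨u, v, hu, hv, hxu, hyv, huv⟩ := isOpen_prod_iff.1 hW z.1 z.2 hzW
    refine ⟨u ∩ f ⁻¹' (g '' v), ?_, hu.inter (hf.isOpen_preimage _ (hgopen v hv)),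
      hxu, ⟨z.2, hyv, hz.symm⟩⟩
    rintro a ⟨hau, y, hyv', hgy⟩
    exact ⟨(a, y), ⟨huv ⟨hau, hyv'⟩, hgy.symm⟩, rfl⟩
  -- each fibre of p is connected: it is the range of a continuous map from g ⁻¹' {f x}
  have hfibZ : ∀ x : X, IsConnected (p ⁻¹' {x}) := by
    intro x
    have hc : ConnectedSpace ↥(g ⁻¹' {f x}) :=
      isConnected_iff_connectedSpace.mp (hfib (f x))
    set q : ↥(g ⁻¹' {f x}) → Z := fun y => ⟨(x, y.1), y.2.symm⟩ with hq
    have hqc : Continuous q :=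
      Continuous.subtype_mk (continuous_const.prodMk continuous_subtype_val) _
    have hrange : Set.range q = p ⁻¹' {x} := by
      ext z
      constructor
      · rintro ⟨y, rfl⟩; rfl
      · intro hzx
        have hx : z.1.1 = x := hzx
        have : g z.1.2 = f x := by rw [← hx]; exact z.2.symm
        exact ⟨⟨z.1.2, this⟩, by
          apply Subtype.ext
          exact Prod.ext hx.symm rfl⟩
    rw [← hrange]
    exact isConnected_range hqc
  -- Z is nonempty
  obtain ⟨x₀⟩ := hX.toNonempty
  obtain ⟨y₀, hy₀⟩ := hgsurj (f x₀)
  have hne : Z.Nonempty := ⟨(x₀, y₀), hy₀.symm⟩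
  rw [isConnected_iff_connectedSpace]
  have hnez : Nonempty Z := hne.to_subtype
  refine { toNonempty := hnez, toPreconnectedSpace := ⟨?_⟩ }
  rw [isPreconnected_iff_subset_of_fully_disjoint_closed isClosed_univ]
  intro u v hu hv hcov hdisj
  -- u and v are complementary, hence clopen
  have hcompl : u = vᶜ := by
    ext z
    constructor
    · intro hzu hzv
      exact (Set.disjoint_iff.1 hdisj ⟨hzu, hzv⟩)
    · intro hzv
      rcases hcov (Set.mem_univ z) with h | h
      · exact h
      · exact absurd h hzv
  have huo : IsOpen u := by rw [hcompl]; exact hv.isOpen_compl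
  have hvo : IsOpen v := by
    have : v = uᶜ := by rw [hcompl, compl_compl]
    rw [this]; exact hu.isOpen_compl
  -- each fibre lies entirely in u or in v
  have hfib_or : ∀ x : X, p ⁻¹' {x} ⊆ u ∨ p ⁻¹' {x} ⊆ v := by
    intro x
    exact (hfibZ x).isPreconnected.subset_or_subset huo hvo
      (by rw [hcompl]; exact disjoint_compl_left)
      (fun z _ => hcov (Set.mem_univ z))
  set A : Set X := p '' u with hA
  set B : Set X := p '' v with hB
  have hAo : IsOpen A := hpopen u huo
  have hBo : IsOpen B := hpopen v hvo
  have hABcov : A ∪ B = Set.univ := by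
    ext x
    simp only [Set.mem_univ, iff_true]
    obtain ⟨z, hz⟩ : (p ⁻¹' {x}).Nonempty := by
      obtain ⟨y, hy⟩ := hgsurj (f x)
      exact ⟨⟨(x, y), hy.symm⟩, rfl⟩
    rcases hcov (Set.mem_univ z) with h | h
    · exact Or.inl ⟨z, h, hz⟩
    · exact Or.inr ⟨z, h, hz⟩
  have hABdisj : A ∩ B = ∅ := by
    by_contra h
    obtain ⟨x, ⟨z₁, hz₁u, hz₁⟩, ⟨z₂, hz₂v, hz₂⟩⟩ := Set.nonempty_iff_ne_empty.2 h
    rcases hfib_or x with hs | hs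
    · exact Set.disjoint_iff.1 hdisj ⟨hs hz₂, hz₂v⟩
    · exact Set.disjoint_iff.1 hdisj ⟨hz₁u, hs hz₁⟩
  -- A is clopen in the connected space X
  have hAclopen : IsClopen A := by
    refine ⟨?_, hAo⟩
    have : A = Bᶜ := by
      ext x
      constructor
      · intro hxA hxB
        exact absurd (Set.mem_inter hxA hxB) (by rw [hABdisj]; exact Set.notMem_empty x)
      · intro hxB
        rcases (hABcov ▸ Set.mem_univ x : x ∈ A ∪ B) with h | h
        · exact h
        · exact absurd h hxB
    rw [this]
    exact hBo.isClosed_compl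
  rcases isClopen_iff.1 hAclopen with hAe | hAu
  · -- A empty, so u empty, so univ ⊆ v
    right
    intro z _
    rcases hcov (Set.mem_univ z) with h | h
    · exfalso
      have : p z ∈ A := ⟨z, h, rfl⟩
      rw [hAe] at this
      exact this
    · exact h
  · -- A = univ, so B = ∅, so v = ∅, so univ ⊆ u
    left
    intro z _
    rcases hcov (Set.mem_univ z) with h | h
    · exact h
    · exfalso
      have : p z ∈ A ∩ B := ⟨hAu ▸ Set.mem_univ (p z), ⟨z, h, rfl⟩⟩
      rw [hABdisj] at this
      exact this
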